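/- In the iterative daisy construction (T₁ = T of size c·n with sets of size ℓ; K_i = {j : deg_{T_i}(j) > c·n^{i/ℓ}}; S_i = {T ∈ T_i : |T\K_i| ≤ i}; T_{i+1} = T_i \ S_i), for every i ∈ [ℓ] and every j ∈ [n]\K_i it holds that deg_{S_i}(j) ≤ c·n^{max{1, i−1}/ℓ}. -/
import Mathlib


/-- degree bound outside the kernel in the iterative daisy construction. -/
theorem iterative_daisy_degree_bound
    (n ℓ : ℕ) (hℓ : 1 ≤ ℓ) (c : ℝ)
    (Tfam : ℕ → Finset (Finset (Fin n)))
    (Kfam : ℕ → Finset (Fin n))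
    (Sfam : ℕ → Finset (Finset (Fin n)))
    (hsize : ∀ A ∈ Tfam 1, A.card = ℓ)
    (hcard : ((Tfam 1).card : ℝ) = c * n)
    (hK : ∀ i ∈ Finset.Icc 1 ℓ, Kfam i =
      Finset.univ.filter (fun j : Fin n =>
        c * (n : ℝ) ^ ((i : ℝ) / (ℓ : ℝ)) < (((Tfam i).filter (fun A => j ∈ A)).card : ℝ)))
    (hS : ∀ i ∈ Finset.Icc 1 ℓ, Sfam i = (Tfam i).filter (fun A => (A \ Kfam i).card ≤ i))
    (hT : ∀ i ∈ Finset.Icc 1 ℓ, Tfam (i + 1) = Tfam i \ Sfam i) :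
    ∀ i ∈ Finset.Icc 1 ℓ, ∀ j : Fin n, j ∉ Kfam i →
      (((Sfam i).filter (fun A => j ∈ A)).card : ℝ) ≤
        c * (n : ℝ) ^ (((max 1 (i - 1) : ℕ) : ℝ) / (ℓ : ℝ)) := by
  intro i hi j hj
  rcases Nat.eq_zero_or_pos n with hn | hn
  · subst hn; exact j.elim0
  have hn1 : (1:ℝ) ≤ (n:ℝ) := by exact_mod_cast hn
  have hc : 0 ≤ c := by
    by_contra h
    push_neg at h
    have h2 : c * n < 0 := mul_neg_of_neg_of_pos h (by exact_mod_cast hn)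
    rw [← hcard] at h2
    exact absurd h2 (not_lt.mpr (Nat.cast_nonneg _))
  simp only [Finset.mem_Icc] at hi
  have hiIcc : i ∈ Finset.Icc 1 ℓ := Finset.mem_Icc.mpr hi
  have hSsub : Sfam i ⊆ Tfam i := by
    rw [hS i hiIcc]; exact Finset.filter_subset _ _
  rcases eq_or_lt_of_le hi.1 with h1 | h2
  · -- case i = 1
    have hjdeg : (((Tfam i).filter (fun A => j ∈ A)).card : ℝ) ≤
        c * (n : ℝ) ^ ((i : ℝ) / (ℓ : ℝ)) := by
      rw [hK i hiIcc] at hj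
      simp only [Finset.mem_filter, Finset.mem_univ, true_and, not_lt] at hj
      exact hj
    have hmono : ((Sfam i).filter (fun A => j ∈ A)).card ≤
        ((Tfam i).filter (fun A => j ∈ A)).card :=
      Finset.card_le_card (Finset.filter_subset_filter _ hSsub)
    have hmax : ((max 1 (i - 1) : ℕ) : ℝ) = (i : ℝ) := by
      have : max 1 (i - 1) = i := by omega
      rw [this]
    rw [hmax]
    exact le_trans (by exact_mod_cast hmono) hjdeg
  · -- case i ≥ 2
    have hi1Icc : i - 1 ∈ Finset.Icc 1 ℓ := Finset.mem_Icc.mpr ⟨by omega, by omega⟩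
    have hTeq : Tfam i = Tfam (i - 1) \ Sfam (i - 1) := by
      have := hT (i - 1) hi1Icc
      rwa [show i - 1 + 1 = i by omega] at this
    have hTsub : Tfam i ⊆ Tfam (i - 1) := by
      rw [hTeq]; exact Finset.sdiff_subset
    -- K_i ⊆ K_{i-1}
    have hKsub : Kfam i ⊆ Kfam (i - 1) := by
      intro k hk
      rw [hK i hiIcc] at hk
      rw [hK (i - 1) hi1Icc]
      simp only [Finset.mem_filter, Finset.mem_univ, true_and] at hk ⊢
      have hdeg : (((Tfam i).filter (fun A => k ∈ A)).card : ℝ) ≤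
          (((Tfam (i - 1)).filter (fun A => k ∈ A)).card : ℝ) := by
        exact_mod_cast Finset.card_le_card (Finset.filter_subset_filter _ hTsub)
      have hexp : c * (n : ℝ) ^ (((i - 1 : ℕ) : ℝ) / (ℓ : ℝ)) ≤
          c * (n : ℝ) ^ ((i : ℝ) / (ℓ : ℝ)) := by
        apply mul_le_mul_of_nonneg_left _ hc
        apply Real.rpow_le_rpow_of_exponent_le hn1
        have h1 : ((i - 1 : ℕ) : ℝ) ≤ (i : ℝ) := by exact_mod_cast Nat.sub_le i 1
        have hlp : (0:ℝ) < (ℓ:ℝ) := by exact_mod_cast hℓ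
        exact div_le_div_of_nonneg_right h1 hlp.le
      exact lt_of_le_of_lt hexp (lt_of_lt_of_le hk hdeg)
    have hmax : (max 1 (i - 1) : ℕ) = i - 1 := by omega
    rw [hmax]
    by_cases hj1 : j ∈ Kfam (i - 1)
    · -- contradiction case: filter is empty
      have hempty : (Sfam i).filter (fun A => j ∈ A) = ∅ := by
        rw [Finset.eq_empty_iff_forall_notMem]
        intro A hA
        simp only [Finset.mem_filter] at hA
        obtain ⟨hAS, hjA⟩ := hA
        have hAT : A ∈ Tfam i := hSsub hAS
        have hAcard : (A \ Kfam i).card ≤ i := by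
          rw [hS i hiIcc] at hAS
          exact (Finset.mem_filter.mp hAS).2
        have hAnotS : A ∉ Sfam (i - 1) := by
          rw [hTeq] at hAT
          exact (Finset.mem_sdiff.mp hAT).2
        have hAT1 : A ∈ Tfam (i - 1) := by
          rw [hTeq] at hAT
          exact (Finset.mem_sdiff.mp hAT).1
        have hAcard1 : i ≤ (A \ Kfam (i - 1)).card := by
          rw [hS (i - 1) hi1Icc] at hAnotS
          simp only [Finset.mem_filter, not_and, not_le] at hAnotS
          have := hAnotS hAT1
          omega
        have hsdsub : A \ Kfam (i - 1) ⊆ A \ Kfam i :=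
          Finset.sdiff_subset_sdiff (le_refl A) hKsub
        have heq : A \ Kfam (i - 1) = A \ Kfam i :=
          Finset.eq_of_subset_of_card_le hsdsub (by omega)
        have hjmem : j ∈ A \ Kfam i := Finset.mem_sdiff.mpr ⟨hjA, hj⟩
        rw [← heq] at hjmem
        exact (Finset.mem_sdiff.mp hjmem).2 hj1
      rw [hempty]
      simp only [Finset.card_empty, Nat.cast_zero]
      positivity
    · -- j ∉ K_{i-1}: bound by deg_{T_{i-1}}(j)
      have hjdeg : (((Tfam (i - 1)).filter (fun A => j ∈ A)).card : ℝ) ≤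
          c * (n : ℝ) ^ (((i - 1 : ℕ) : ℝ) / (ℓ : ℝ)) := by
        rw [hK (i - 1) hi1Icc] at hj1
        simp only [Finset.mem_filter, Finset.mem_univ, true_and, not_lt] at hj1
        exact hj1
      have hmono : ((Sfam i).filter (fun A => j ∈ A)).card ≤
          ((Tfam (i - 1)).filter (fun A => j ∈ A)).card :=
        Finset.card_le_card (Finset.filter_subset_filter _ (hSsub.trans hTsub))
      exact le_trans (by exact_mod_cast hmono) hjdeg
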